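/- For every real α > 1/2 and every integer T ≥ 1, the probability that there exists an integer n > T such that |μ_n − p| > √(α·ln n / n) is at most 2 / ((2α−1)·T^{2α−1}). -/

import Mathlib

open MeasureTheory ProbabilityTheory Real

lemma key_quad : ∀ a b : ℝ, a * b - a * a ≤ 1 / 4 * b ^ 2 := fun a b => by
  nlinarith [sq_nonneg (b - 2 * a)]

lemma scalar_hoeffding {p : ℝ} (hp0 : 0 ≤ p) (hp1 : p ≤ 1) {t : ℝ} (ht : 0 ≤ t) :
    1 - p + p * exp t ≤ exp (p * t + t ^ 2 / 8) := by
  set d : ℝ → ℝ := fun s => 1 - p + p * exp s with hd_def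
  have hd1 : ∀ s, 0 ≤ s → 1 ≤ d s := by
    intro s hs
    have h1 : 1 ≤ exp s := one_le_exp hs
    have : p * 1 ≤ p * exp s := by nlinarith
    simp only [hd_def]; nlinarith
  have hdpos : ∀ s, 0 ≤ s → 0 < d s := fun s hs => lt_of_lt_of_le one_pos (hd1 s hs)
  have hdd : ∀ s, HasDerivAt d (p * exp s) s := by
    intro s
    exact ((Real.hasDerivAt_exp s).const_mul p).const_add (1 - p)
  set g : ℝ → ℝ := fun s => p * exp s / d s - p - s / 4 with hg_def
  have hg : ∀ s, 0 ≤ s → HasDerivAt g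
      ((p * exp s * d s - p * exp s * (p * exp s)) / (d s) ^ 2 - 1 / 4) s := by
    intro s hs
    have hnum : HasDerivAt (fun u => p * exp u) (p * exp s) s := (Real.hasDerivAt_exp s).const_mul p
    have hdiv : HasDerivAt (fun u => p * exp u / d u)
        ((p * exp s * d s - p * exp s * (p * exp s)) / (d s) ^ 2) s :=
      hnum.div (hdd s) (hdpos s hs).ne'
    have hlin : HasDerivAt (fun u : ℝ => p + u / 4) (1 / 4) s := by
      simpa using ((hasDerivAt_id s).div_const 4).const_add p
    refine (hdiv.sub hlin).congr_of_eventuallyEq (Filter.Eventually.of_forall fun u => ?_)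
    simp only [hg_def, Pi.sub_apply]; ring
  have hg0 : g 0 = 0 := by simp [hg_def, hd_def]
  have hgle : ∀ s, 0 ≤ s → g s ≤ 0 := by
    intro s hs
    rcases eq_or_lt_of_le hs with rfl | hs'
    · exact le_of_eq hg0
    obtain ⟨c, hc, hceq⟩ := exists_hasDerivAt_eq_slope g _ hs'
      (fun x hx => ((hg x hx.1).continuousAt).continuousWithinAt)
      (fun x hx => hg x hx.1.le)
    have hcpos : (0:ℝ) ≤ c := hc.1.le
    have hder : (p * exp c * d c - p * exp c * (p * exp c)) / (d c) ^ 2 - 1 / 4 ≤ 0 := by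
      have hdc := hdpos c hcpos
      rw [sub_nonpos, div_le_iff₀ (by positivity)]
      exact key_quad (p * exp c) (d c)
    have hsl : (g s - g 0) / (s - 0) ≤ 0 := by rw [← hceq]; exact hder
    rw [hg0, sub_zero, sub_zero, div_nonpos_iff] at hsl
    rcases hsl with ⟨h1, h2⟩ | ⟨h1, _⟩
    · linarith
    · exact h1
  set f : ℝ → ℝ := fun s => Real.log (d s) - p * s - s ^ 2 / 8 with hf_def
  have hf : ∀ s, 0 ≤ s → HasDerivAt f (g s) s := by
    intro s hs
    have hlog : HasDerivAt (fun u => Real.log (d u)) (p * exp s / d s) s :=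
      (hdd s).log (hdpos s hs).ne'
    have h1 : HasDerivAt (fun u : ℝ => p * u) p s := by simpa using (hasDerivAt_id s).const_mul p
    have h2 : HasDerivAt (fun u : ℝ => u ^ 2 / 8) (s / 4) s := by
      have h := (hasDerivAt_pow 2 s).div_const 8
      refine h.congr_deriv ?_
      rw [show (2:ℕ) - 1 = 1 from rfl]; push_cast; ring
    have := (hlog.sub h1).sub h2
    exact this.congr_of_eventuallyEq (Filter.Eventually.of_forall fun u => rfl)
  have hfle : f t ≤ 0 := by
    rcases eq_or_lt_of_le ht with rfl | ht'
    · simp [hf_def, hd_def]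
    obtain ⟨c, hc, hceq⟩ := exists_hasDerivAt_eq_slope f g ht'
      (fun x hx => ((hf x hx.1).continuousAt).continuousWithinAt)
      (fun x hx => hf x hx.1.le)
    have hsl : (f t - f 0) / (t - 0) ≤ 0 := by rw [← hceq]; exact hgle c hc.1.le
    have hf0 : f 0 = 0 := by simp [hf_def, hd_def]
    rw [hf0, sub_zero, sub_zero, div_nonpos_iff] at hsl
    rcases hsl with ⟨h1, h2⟩ | ⟨h1, _⟩
    · linarith
    · exact h1
  have hlog_le : Real.log (d t) ≤ p * t + t ^ 2 / 8 := by
    simp only [hf_def] at hfle; linarith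
  calc 1 - p + p * exp t = d t := rfl
    _ = exp (Real.log (d t)) := (Real.exp_log (hdpos t ht)).symm
    _ ≤ exp (p * t + t ^ 2 / 8) := exp_le_exp.mpr hlog_le

lemma mgf_step {Ω : Type*} [MeasurableSpace Ω] (μ : Measure Ω) [IsProbabilityMeasure μ]
    (Y : Ω → ℝ) (hm : Measurable Y) (hr : ∀ ω, Y ω ∈ Set.Icc (0:ℝ) 1) {q : ℝ}
    (hq : ∫ ω, Y ω ∂μ = q) {t : ℝ} (ht : 0 ≤ t) :
    ∫ ω, exp (t * (Y ω - q)) ∂μ ≤ exp (t ^ 2 / 8) := by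
  have hYint : Integrable Y μ := by
    refine ⟨hm.aestronglyMeasurable, HasFiniteIntegral.of_bounded (C := 1) ?_⟩
    filter_upwards with ω
    rw [Real.norm_eq_abs, abs_le]
    exact ⟨by linarith [(hr ω).1], (hr ω).2⟩
  have hq0 : 0 ≤ q := hq ▸ integral_nonneg fun ω => (hr ω).1
  have hq1 : q ≤ 1 := by
    rw [← hq]
    calc ∫ ω, Y ω ∂μ ≤ ∫ _, (1:ℝ) ∂μ := integral_mono hYint (integrable_const 1) fun ω => (hr ω).2
      _ = 1 := by simp
  have hpt : ∀ ω, exp (t * Y ω) ≤ 1 - Y ω + Y ω * exp t := by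
    intro ω
    have h := convexOn_exp.2 (Set.mem_univ (0:ℝ)) (Set.mem_univ t)
      (by linarith [(hr ω).2] : 0 ≤ 1 - Y ω) (hr ω).1 (by ring)
    simp only [smul_eq_mul, mul_zero, zero_add, exp_zero, mul_one] at h
    calc exp (t * Y ω) = exp ((1 - Y ω) * 0 + Y ω * t) := by ring_nf
      _ ≤ (1 - Y ω) * 1 + Y ω * exp t := by simpa using h
      _ = 1 - Y ω + Y ω * exp t := by ring
  have hint1 : Integrable (fun ω => exp (t * Y ω)) μ := by
    refine ⟨((hm.const_mul t).exp).aestronglyMeasurable, HasFiniteIntegral.of_bounded (C := exp t) ?_⟩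
    filter_upwards with ω
    rw [Real.norm_eq_abs, abs_of_pos (exp_pos _)]
    exact exp_le_exp.mpr (by nlinarith [(hr ω).1, (hr ω).2])
  have hint2 : Integrable (fun ω => 1 - Y ω + Y ω * exp t) μ :=
    ((integrable_const 1).sub hYint).add (hYint.mul_const _)
  calc ∫ ω, exp (t * (Y ω - q)) ∂μ = ∫ ω, exp (-(t*q)) * exp (t * Y ω) ∂μ := by
        congr 1; ext ω; rw [← exp_add]; ring_nf
    _ = exp (-(t*q)) * ∫ ω, exp (t * Y ω) ∂μ := integral_const_mul _ _
    _ ≤ exp (-(t*q)) * ∫ ω, (1 - Y ω + Y ω * exp t) ∂μ := by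
        gcongr
        exact hpt
    _ = exp (-(t*q)) * (1 - q + q * exp t) := by
        have hsub : Integrable (fun ω => 1 - Y ω) μ := (integrable_const 1).sub hYint
        have hmulc : Integrable (fun ω => Y ω * exp t) μ := hYint.mul_const _
        rw [integral_add hsub hmulc, integral_sub (integrable_const 1) hYint,
          integral_mul_const, hq]
        simp
    _ ≤ exp (-(t*q)) * exp (q * t + t ^ 2 / 8) := by
        gcongr
        exact scalar_hoeffding hq0 hq1 ht
    _ = exp (t ^ 2 / 8) := by rw [← exp_add]; ring_nf

lemma tail_ge {Ω : Type*} [MeasurableSpace Ω] (μ : Measure Ω) [IsProbabilityMeasure μ]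
    (X : ℕ → Ω → ℝ) (p : ℝ) (hp0 : 0 ≤ p) (hp1 : p ≤ 1)
    (hmeas : ∀ n, Measurable (X n))
    (hrange : ∀ n ω, X n ω ∈ Set.Icc (0 : ℝ) 1)
    (hindep : iIndepFun X μ)
    (hmean : ∀ n, ∫ ω, X n ω ∂μ = p)
    (n : ℕ) {ε : ℝ} (hε : 0 ≤ ε) :
    (μ {ω | (n:ℝ) * ε ≤ ∑ k ∈ Finset.range n, (X k ω - p)}).toReal
      ≤ exp (-2 * n * ε ^ 2) := by
  set t : ℝ := 4 * ε with ht_def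
  have ht : 0 ≤ t := by positivity
  set Y : ℕ → Ω → ℝ := fun k ω => X k ω - p with hY_def
  have hYmeas : ∀ k, Measurable (Y k) := fun k => (hmeas k).sub_const p
  have hYindep : iIndepFun Y μ := by
    have := hindep.comp (fun _ (x : ℝ) => x - p) (fun _ => measurable_id.sub_const p)
    exact this
  have hYbdd : ∀ k ω, |Y k ω| ≤ 1 := by
    intro k ω
    rw [abs_le]
    constructor
    · have := (hrange k ω).1; simp only [hY_def]; linarith
    · have := (hrange k ω).2; simp only [hY_def]; linarith
  have h_int : ∀ k, Integrable (fun ω => exp (t * Y k ω)) μ := by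
    intro k
    refine ⟨((hYmeas k).const_mul t).exp.aestronglyMeasurable,
      HasFiniteIntegral.of_bounded (C := exp t) ?_⟩
    filter_upwards with ω
    rw [Real.norm_eq_abs, abs_of_pos (exp_pos _)]
    refine exp_le_exp.mpr ?_
    have h := (abs_le.mp (hYbdd k ω)).2
    nlinarith
  have hS_int : Integrable (fun ω => exp (t * (∑ k ∈ Finset.range n, Y k) ω)) μ :=
    hYindep.integrable_exp_mul_sum hYmeas (fun i _ => h_int i)
  have hmgf_le : mgf (∑ k ∈ Finset.range n, Y k) μ t ≤ exp ((n:ℝ) * t ^ 2 / 8) := by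
    rw [hYindep.mgf_sum hYmeas]
    calc ∏ k ∈ Finset.range n, mgf (Y k) μ t
        ≤ ∏ k ∈ Finset.range n, exp (t ^ 2 / 8) := by
          refine Finset.prod_le_prod (fun k _ => mgf_nonneg) (fun k _ => ?_)
          exact mgf_step μ (X k) (hmeas k) (hrange k) (hmean k) ht
      _ = exp ((n:ℝ) * t ^ 2 / 8) := by
          rw [Finset.prod_const, ← Real.exp_nat_mul]
          norm_num [mul_div_assoc]
  have hset : {ω | (n:ℝ) * ε ≤ ∑ k ∈ Finset.range n, (X k ω - p)}
      = {ω | (n:ℝ) * ε ≤ (∑ k ∈ Finset.range n, Y k) ω} := by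
    ext ω; simp [hY_def]
  rw [hset]
  calc (μ {ω | (n:ℝ) * ε ≤ (∑ k ∈ Finset.range n, Y k) ω}).toReal
      ≤ exp (-t * ((n:ℝ) * ε)) * mgf (∑ k ∈ Finset.range n, Y k) μ t :=
        measure_ge_le_exp_mul_mgf _ ht hS_int
    _ ≤ exp (-t * ((n:ℝ) * ε)) * exp ((n:ℝ) * t ^ 2 / 8) := by
        have := exp_pos (-t * ((n:ℝ) * ε))
        nlinarith [mgf_nonneg (X := ∑ k ∈ Finset.range n, Y k) (μ := μ) (t := t), hmgf_le]
    _ = exp (-2 * n * ε ^ 2) := by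
        rw [← exp_add]
        congr 1
        simp only [ht_def]
        ring

-- rpow telescoping step
lemma rpow_telescope {b : ℝ} (hb : 0 < b) {m : ℕ} (hm : 1 ≤ m) :
    b * ((m:ℝ) + 1) ^ (-(b + 1)) ≤ (m:ℝ) ^ (-b) - ((m:ℝ) + 1) ^ (-b) := by
  have hm1 : (1:ℝ) ≤ (m:ℝ) := by exact_mod_cast hm
  have hlt : (m:ℝ) < (m:ℝ) + 1 := by linarith
  obtain ⟨c, hc, hceq⟩ := exists_hasDerivAt_eq_slope (fun x : ℝ => x ^ (-b))
    (fun x => -b * x ^ (-b - 1)) hlt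
    (fun x hx => by
      have hx0 : x ≠ 0 := by rcases hx with ⟨h1, _⟩; intro h; rw [h] at h1; linarith
      exact (Real.hasDerivAt_rpow_const (Or.inl hx0)).continuousAt.continuousWithinAt)
    (fun x hx => by
      have hx0 : x ≠ 0 := by intro h; rw [h] at hx; rcases hx with ⟨h1, _⟩; linarith
      exact Real.hasDerivAt_rpow_const (Or.inl hx0))
  have hc0 : (0:ℝ) < c := lt_of_le_of_lt (by linarith) hc.1
  have hslope : ((m:ℝ) + 1) ^ (-b) - (m:ℝ) ^ (-b) = -b * c ^ (-b - 1) := by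
    rw [hceq]; field_simp; ring
  have hmono : ((m:ℝ) + 1) ^ (-b - 1) ≤ c ^ (-b - 1) :=
    Real.rpow_le_rpow_of_nonpos hc0 hc.2.le (by linarith)
  have : b * ((m:ℝ) + 1) ^ (-b - 1) ≤ b * c ^ (-b - 1) := by nlinarith
  have hexp : -(b + 1) = -b - 1 := by ring
  rw [hexp]
  linarith [hslope, this]

lemma telescoped_sum {α : ℝ} (hα : 1 / 2 < α) {T : ℕ} (hT : 1 ≤ T) (N : ℕ) :
    ∑ n ∈ Finset.Ico (T + 1) (T + 1 + N), (2 * α - 1) * (n:ℝ) ^ (-(2 * α))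
      ≤ (T:ℝ) ^ (-(2 * α - 1)) := by
  set b : ℝ := 2 * α - 1 with hb_def
  have hb : 0 < b := by simp only [hb_def]; linarith
  suffices h : ∑ n ∈ Finset.Ico (T + 1) (T + 1 + N), b * (n:ℝ) ^ (-(2 * α))
      ≤ (T:ℝ) ^ (-b) - ((T + N : ℕ):ℝ) ^ (-b) by
    calc _ ≤ (T:ℝ) ^ (-b) - ((T + N : ℕ):ℝ) ^ (-b) := h
      _ ≤ (T:ℝ) ^ (-b) := by
          have : (0:ℝ) ≤ ((T + N : ℕ):ℝ) ^ (-b) := Real.rpow_nonneg (by positivity) _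
          linarith
  induction N with
  | zero => simp
  | succ N ih =>
    rw [show T + 1 + (N + 1) = (T + 1 + N) + 1 from rfl,
      Finset.sum_Ico_succ_top (by omega)]
    have hkey : b * ((T + 1 + N : ℕ):ℝ) ^ (-(2 * α)) ≤
        ((T + N : ℕ):ℝ) ^ (-b) - (((T + N : ℕ):ℝ) + 1) ^ (-b) := by
      have h2 : (2 * α) = b + 1 := by simp only [hb_def]; ring
      have := rpow_telescope hb (m := T + N) (by omega)
      rw [h2]
      convert this using 3 <;> push_cast <;> ring
    have hcast : (((T + N : ℕ):ℝ) + 1) = ((T + N + 1 : ℕ):ℝ) := by push_cast; ring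
    calc ∑ n ∈ Finset.Ico (T + 1) (T + 1 + N), b * (n:ℝ) ^ (-(2 * α))
          + b * ((T + 1 + N : ℕ):ℝ) ^ (-(2 * α))
        ≤ ((T:ℝ) ^ (-b) - ((T + N : ℕ):ℝ) ^ (-b))
          + (((T + N : ℕ):ℝ) ^ (-b) - (((T + N : ℕ):ℝ) + 1) ^ (-b)) := by
          exact add_le_add ih hkey
      _ = (T:ℝ) ^ (-b) - ((T + (N+1) : ℕ):ℝ) ^ (-b) := by rw [hcast]; push_cast; ring_nf

lemma per_n {Ω : Type*} [MeasurableSpace Ω] (μ : Measure Ω) [IsProbabilityMeasure μ]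
    (X : ℕ → Ω → ℝ) (p : ℝ) (hp : p ∈ Set.Icc (0 : ℝ) 1)
    (hmeas : ∀ n, Measurable (X n))
    (hrange : ∀ n ω, X n ω ∈ Set.Icc (0 : ℝ) 1)
    (hindep : iIndepFun X μ)
    (hmean : ∀ k, ∫ ω, X k ω ∂μ = p)
    {α : ℝ} (hα : 1 / 2 < α) (n : ℕ) (hn : 1 ≤ n) :
    μ {ω | |(∑ k ∈ Finset.range n, X k ω) / n - p| > Real.sqrt (α * Real.log n / n)}
      ≤ ENNReal.ofReal (2 * (n:ℝ) ^ (-(2 * α))) := by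
  obtain ⟨hp0, hp1⟩ := hp
  have hnpos : (0:ℝ) < n := by exact_mod_cast hn
  have hlogn : 0 ≤ Real.log n := Real.log_nonneg (by exact_mod_cast hn)
  have hαpos : 0 < α := by linarith
  set ε : ℝ := Real.sqrt (α * Real.log n / n) with hε_def
  have hε : 0 ≤ ε := Real.sqrt_nonneg _
  have hε2 : ε ^ 2 = α * Real.log n / n := Real.sq_sqrt (by positivity)
  -- the complementary variables
  set X' : ℕ → Ω → ℝ := fun k ω => 1 - X k ω with hX'_def
  have hmeas' : ∀ k, Measurable (X' k) := fun k => (measurable_const).sub (hmeas k)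
  have hrange' : ∀ k ω, X' k ω ∈ Set.Icc (0:ℝ) 1 := by
    intro k ω
    have h := hrange k ω
    exact ⟨by simp only [hX'_def]; linarith [h.2], by simp only [hX'_def]; linarith [h.1]⟩
  have hindep' : iIndepFun X' μ := by
    have := hindep.comp (fun _ (x : ℝ) => 1 - x) (fun _ => measurable_const.sub measurable_id)
    exact this
  have hXint : ∀ k, Integrable (X k) μ := by
    intro k
    refine ⟨(hmeas k).aestronglyMeasurable, HasFiniteIntegral.of_bounded (C := 1) ?_⟩
    filter_upwards with ω
    rw [Real.norm_eq_abs, abs_le]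
    exact ⟨by linarith [(hrange k ω).1], (hrange k ω).2⟩
  have hmean' : ∀ k, ∫ ω, X' k ω ∂μ = 1 - p := by
    intro k
    simp only [hX'_def]
    rw [integral_sub (integrable_const 1) (hXint k), hmean k]
    simp
  -- subset relation
  set B1 : Set Ω := {ω | (n:ℝ) * ε ≤ ∑ k ∈ Finset.range n, (X k ω - p)} with hB1_def
  set B2 : Set Ω := {ω | (n:ℝ) * ε ≤ ∑ k ∈ Finset.range n, (X' k ω - (1 - p))} with hB2_def
  have hsub : {ω | |(∑ k ∈ Finset.range n, X k ω) / n - p| > ε} ⊆ B1 ∪ B2 := by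
    intro ω hω
    simp only [Set.mem_setOf_eq] at hω
    set s : ℝ := ∑ k ∈ Finset.range n, (X k ω - p) with hs_def
    have hsum : (∑ k ∈ Finset.range n, X k ω) / n - p = s / n := by
      rw [hs_def, Finset.sum_sub_distrib, Finset.sum_const, Finset.card_range, nsmul_eq_mul]
      field_simp
    rw [hsum, abs_div, abs_of_pos hnpos] at hω
    have habs : (n:ℝ) * ε < |s| := by
      rw [gt_iff_lt, lt_div_iff₀ hnpos] at hω
      linarith [hω]
    have hs2 : ∑ k ∈ Finset.range n, (X' k ω - (1 - p)) = -s := by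
      rw [hs_def, ← Finset.sum_neg_distrib]
      exact Finset.sum_congr rfl fun k _ => by simp only [hX'_def]; ring
    rcases abs_cases s with ⟨heq, _⟩ | ⟨heq, _⟩
    · left; simp only [hB1_def, Set.mem_setOf_eq, ← hs_def]; linarith [habs, heq]
    · right
      simp only [hB2_def, Set.mem_setOf_eq, hs2]
      linarith [habs, heq]
  have hbound : ENNReal.ofReal (exp (-2 * n * ε ^ 2)) = ENNReal.ofReal ((n:ℝ) ^ (-(2 * α))) := by
    congr 1
    rw [hε2, Real.rpow_def_of_pos hnpos]
    congr 1
    field_simp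
  have hB1 : μ B1 ≤ ENNReal.ofReal (exp (-2 * n * ε ^ 2)) := by
    rw [ENNReal.le_ofReal_iff_toReal_le (measure_ne_top μ _) (exp_pos _).le]
    exact tail_ge μ X p hp0 hp1 hmeas hrange hindep hmean n hε
  have hB2 : μ B2 ≤ ENNReal.ofReal (exp (-2 * n * ε ^ 2)) := by
    rw [ENNReal.le_ofReal_iff_toReal_le (measure_ne_top μ _) (exp_pos _).le]
    exact tail_ge μ X' (1 - p) (by linarith) (by linarith) hmeas' hrange' hindep' hmean' n hε
  calc μ {ω | |(∑ k ∈ Finset.range n, X k ω) / n - p| > ε}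
      ≤ μ (B1 ∪ B2) := measure_mono hsub
    _ ≤ μ B1 + μ B2 := measure_union_le _ _
    _ ≤ ENNReal.ofReal (exp (-2 * n * ε ^ 2)) + ENNReal.ofReal (exp (-2 * n * ε ^ 2)) :=
        add_le_add hB1 hB2
    _ = ENNReal.ofReal (2 * (n:ℝ) ^ (-(2 * α))) := by
        rw [hbound, ← ENNReal.ofReal_add (by positivity) (by positivity)]
        congr 1
        ring

/-- For every real `α > 1/2` and every integer `T ≥ 1`, the probability that there
exists an integer `n > T` such that `|μ_n − p| > √(α·ln n / n)` is at most
`2 / ((2α−1)·T^{2α−1})`.  Here `X k` is the `(k+1)`-st sample of an i.i.d. sequence of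
`[0,1]`-valued random variables with mean `p`, and `μ_n` is the empirical mean of the first
`n` samples. -/
theorem stmt_8 {Ω : Type*} [MeasurableSpace Ω] (μ : Measure Ω) [IsProbabilityMeasure μ]
    (X : ℕ → Ω → ℝ) (p : ℝ) (hp : p ∈ Set.Icc (0 : ℝ) 1)
    (hmeas : ∀ n, Measurable (X n))
    (hrange : ∀ n ω, X n ω ∈ Set.Icc (0 : ℝ) 1)
    (hindep : iIndepFun X μ)
    (hident : ∀ n, IdentDistrib (X n) (X 0) μ μ)
    (hmean : ∫ ω, X 0 ω ∂μ = p)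
    (α : ℝ) (hα : 1 / 2 < α) (T : ℕ) (hT : 1 ≤ T) :
    μ {ω | ∃ n : ℕ, T < n ∧
        |(∑ k ∈ Finset.range n, X k ω) / n - p| > Real.sqrt (α * Real.log n / n)}
      ≤ ENNReal.ofReal (2 / ((2 * α - 1) * (T : ℝ) ^ (2 * α - 1))) := by
  have hmean' : ∀ k, ∫ ω, X k ω ∂μ = p := fun k => (hident k).integral_eq.trans hmean
  set b : ℝ := 2 * α - 1 with hb_def
  have hb : 0 < b := by simp only [hb_def]; linarith
  have hTpos : (0:ℝ) < (T:ℝ) := by exact_mod_cast hT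
  set A : ℕ → Set Ω := fun n => {ω | T < n ∧
      |(∑ k ∈ Finset.range n, X k ω) / n - p| > Real.sqrt (α * Real.log n / n)} with hA_def
  set h : ℕ → ℝ := fun n => if T < n then 2 * (n:ℝ) ^ (-(2 * α)) else 0 with hh_def
  have hh_nonneg : ∀ n, 0 ≤ h n := by
    intro n; simp only [hh_def]; split
    · positivity
    · exact le_refl 0
  have hAbound : ∀ n, μ (A n) ≤ ENNReal.ofReal (h n) := by
    intro n
    by_cases hn : T < n
    · simp only [hh_def, if_pos hn]
      refine le_trans (measure_mono ?_) (per_n μ X p hp hmeas hrange hindep hmean' hα n (by omega))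
      intro ω hω; exact hω.2
    · have : A n = ∅ := by
        ext ω; simp only [hA_def, Set.mem_setOf_eq, Set.mem_empty_iff_false, iff_false]
        intro hc; exact hn hc.1
      simp [this]
  have hset : {ω | ∃ n : ℕ, T < n ∧
      |(∑ k ∈ Finset.range n, X k ω) / n - p| > Real.sqrt (α * Real.log n / n)} = ⋃ n, A n := by
    ext ω; simp [hA_def]
  rw [hset]
  refine le_trans (measure_iUnion_le A) ?_
  refine Summable.tsum_le_of_sum_le ENNReal.summable ?_
  intro s
  calc ∑ n ∈ s, μ (A n) ≤ ∑ n ∈ s, ENNReal.ofReal (h n) := Finset.sum_le_sum fun n _ => hAbound n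
    _ = ENNReal.ofReal (∑ n ∈ s, h n) :=
        (ENNReal.ofReal_sum_of_nonneg fun n _ => hh_nonneg n).symm
    _ ≤ ENNReal.ofReal (2 / (b * (T:ℝ) ^ b)) := by
        refine ENNReal.ofReal_le_ofReal ?_
        obtain ⟨M, hM⟩ := s.exists_nat_subset_range
        have h1 : ∑ n ∈ s, h n = ∑ n ∈ s.filter (fun n => T < n), 2 * (n:ℝ) ^ (-(2 * α)) := by
          rw [Finset.sum_filter]
        have hsub : s.filter (fun n => T < n) ⊆ Finset.Ico (T + 1) (T + 1 + M) := by
          intro n hn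
          rw [Finset.mem_filter] at hn
          have := hM hn.1
          rw [Finset.mem_range] at this
          rw [Finset.mem_Ico]
          omega
        have h2 : ∑ n ∈ s.filter (fun n => T < n), 2 * (n:ℝ) ^ (-(2 * α))
            ≤ ∑ n ∈ Finset.Ico (T + 1) (T + 1 + M), 2 * (n:ℝ) ^ (-(2 * α)) :=
          Finset.sum_le_sum_of_subset_of_nonneg hsub (fun i _ _ => by positivity)
        have h3 : ∑ n ∈ Finset.Ico (T + 1) (T + 1 + M), 2 * (n:ℝ) ^ (-(2 * α))
            = (2 / b) * ∑ n ∈ Finset.Ico (T + 1) (T + 1 + M), b * (n:ℝ) ^ (-(2 * α)) := by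
          rw [Finset.mul_sum]
          refine Finset.sum_congr rfl fun n _ => ?_
          field_simp
        have h4 : (2 / b) * ∑ n ∈ Finset.Ico (T + 1) (T + 1 + M), b * (n:ℝ) ^ (-(2 * α))
            ≤ (2 / b) * (T:ℝ) ^ (-b) := by
          have := telescoped_sum hα hT M
          have h2b : 0 ≤ 2 / b := by positivity
          simp only [hb_def] at *
          nlinarith [this]
        have h5 : (2 / b) * (T:ℝ) ^ (-b) = 2 / (b * (T:ℝ) ^ b) := by
          rw [Real.rpow_neg hTpos.le]
          have hTb : (0:ℝ) < (T:ℝ) ^ b := Real.rpow_pos_of_pos hTpos b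
          field_simp
        linarith [h1.le, h2, h3.le, h4, h5.le]
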